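/- Define COMP : {0,1}ⁿ × {0,1}ⁿ → {0,1} by COMP(X,Y) = 1 iff Σᵢ 2^{n-i} Xᵢ ≥ Σᵢ 2^{n-i} Yᵢ. Define 2n anchors in ℝ^{2n}: for i ∈ {1,…,n}, a_{2i-1} = (1/2)𝟙 + c_{2i-1}(eᵢ, -eᵢ) labeled positive and a_{2i} = (1/2)𝟙 - c_{2i}(eᵢ, -eᵢ) labeled negative, where c_j = 1/2 + (j-1)/(4n). Then for every (X,Y) ∈ {0,1}^{2n}, the unique closest anchor has positive label iff COMP(X,Y) = 1. Hence COMP has a 2n-anchor NN representation. -/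

import Mathlib

noncomputable def stmt12_cP (n : ℕ) (i : Fin n) : ℝ := 1 / 2 + 2 * (i : ℝ) / (4 * n)
noncomputable def stmt12_cM (n : ℕ) (i : Fin n) : ℝ := 1 / 2 + (2 * (i : ℝ) + 1) / (4 * n)

lemma stmt12_half_sum {n : ℕ} (c : ℝ) (W : Fin n → ℝ) (hW : ∀ k, W k = 0 ∨ W k = 1) (i : Fin n) :
    ∑ k : Fin n, (W k - (1 / 2 + c * (if k = i then (1 : ℝ) else 0))) ^ 2
      = n / 4 + c ^ 2 - 2 * c * (W i - 1 / 2) := by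
  have key : ∀ k : Fin n, (W k - (1 / 2 + c * (if k = i then (1 : ℝ) else 0))) ^ 2
      = 1 / 4 + (if k = i then c ^ 2 - 2 * c * (W i - 1 / 2) else 0) := by
    intro k
    by_cases h : k = i
    · subst h
      simp only [if_pos rfl]
      rcases hW k with h0 | h0 <;> rw [h0] <;> norm_num <;> ring
    · simp only [if_neg h]
      rcases hW k with h0 | h0 <;> rw [h0] <;> norm_num
  rw [Finset.sum_congr rfl fun k _ => key k, Finset.sum_add_distrib, Finset.sum_const,
    Finset.sum_ite_eq' Finset.univ i]
  simp [Finset.card_univ]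
  ring

lemma stmt12_geom (n : ℕ) (i₀ : Fin n) :
    ∑ i ∈ Finset.univ.filter (fun i : Fin n => i₀ < i), (2 : ℝ) ^ (n - 1 - (i : ℕ))
      ≤ 2 ^ (n - 1 - (i₀ : ℕ)) - 1 := by
  classical
  have hinj : ∀ a ∈ Finset.univ.filter (fun i : Fin n => i₀ < i),
      ∀ b ∈ Finset.univ.filter (fun i : Fin n => i₀ < i),
      n - 1 - (a : ℕ) = n - 1 - (b : ℕ) → a = b := by
    intro a _ b _ hab
    have ha := a.isLt; have hb := b.isLt
    exact Fin.ext (by omega)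
  calc ∑ i ∈ Finset.univ.filter (fun i : Fin n => i₀ < i), (2 : ℝ) ^ (n - 1 - (i : ℕ))
      = ∑ k ∈ (Finset.univ.filter (fun i : Fin n => i₀ < i)).image
          (fun i : Fin n => n - 1 - (i : ℕ)), (2 : ℝ) ^ k := (Finset.sum_image hinj).symm
    _ ≤ ∑ k ∈ Finset.range (n - 1 - (i₀ : ℕ)), (2 : ℝ) ^ k := by
        refine Finset.sum_le_sum_of_subset_of_nonneg ?_ (by intros; positivity)
        intro k hk
        simp only [Finset.mem_image, Finset.mem_filter, Finset.mem_univ, true_and] at hk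
        obtain ⟨i, hlt, rfl⟩ := hk
        have h1 := i.isLt
        have h2 : (i₀ : ℕ) < (i : ℕ) := hlt
        simp only [Finset.mem_range]
        omega
    _ = 2 ^ (n - 1 - (i₀ : ℕ)) - 1 := by
        rw [geom_sum_eq (by norm_num : (2:ℝ) ≠ 1)]
        norm_num

set_option maxHeartbeats 2000000 in
/-- The `2n`-anchor NN representation of COMPARISON: a positive anchor is the
unique closest anchor iff `X ≥ Y` as `n`-bit integers. -/
theorem stmt_12 (n : ℕ) (hn : 0 < n)
    (aP aM : Fin n → EuclideanSpace ℝ (Fin n ⊕ Fin n))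
    (haP : ∀ i j, aP i j =
      1 / 2 + (1 / 2 + (2 * (i : ℝ)) / (4 * n)) *
        Sum.elim (fun k => if k = i then (1 : ℝ) else 0)
          (fun k => if k = i then (-1 : ℝ) else 0) j)
    (haM : ∀ i j, aM i j =
      1 / 2 - (1 / 2 + (2 * (i : ℝ) + 1) / (4 * n)) *
        Sum.elim (fun k => if k = i then (1 : ℝ) else 0)
          (fun k => if k = i then (-1 : ℝ) else 0) j) :
    ∀ X Y : Fin n → ℝ, (∀ i, X i = 0 ∨ X i = 1) → (∀ i, Y i = 0 ∨ Y i = 1) →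
      ∀ Z : EuclideanSpace ℝ (Fin n ⊕ Fin n), Z = Sum.elim X Y →
        ((∑ i : Fin n, 2 ^ (n - 1 - (i : ℕ)) * Y i ≤ ∑ i : Fin n, 2 ^ (n - 1 - (i : ℕ)) * X i) ↔
          ∃ i, ∀ j, dist Z (aP i) < dist Z (aM j)) := by
  intro X Y hX hY Z hZ
  have hZj : ∀ j, Z j = Sum.elim X Y j := fun j => by rw [hZ]
  classical
  have hnR : (0 : ℝ) < n := by exact_mod_cast hn
  -- basic facts about the coefficients
  have hiR : ∀ i : Fin n, (i : ℝ) + 1 ≤ n := by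
    intro i; exact_mod_cast i.isLt
  have hcP_lb : ∀ i : Fin n, (1 : ℝ) / 2 ≤ stmt12_cP n i := by
    intro i
    have : (0:ℝ) ≤ 2 * (i : ℝ) / (4 * n) := by positivity
    unfold stmt12_cP; linarith
  have hcP_ub : ∀ i : Fin n, stmt12_cP n i < 1 := by
    intro i
    have h := hiR i
    have : 2 * (i : ℝ) / (4 * n) < 1 / 2 := by
      rw [div_lt_iff₀ (by positivity : (0:ℝ) < 4 * n)]
      nlinarith
    unfold stmt12_cP; linarith
  have hcM_lb : ∀ j : Fin n, (1 : ℝ) / 2 < stmt12_cM n j := by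
    intro j
    have : (0:ℝ) < (2 * (j : ℝ) + 1) / (4 * n) := by positivity
    unfold stmt12_cM; linarith
  have hcM_ub : ∀ j : Fin n, stmt12_cM n j < 1 := by
    intro j
    have h := hiR j
    have : (2 * (j : ℝ) + 1) / (4 * n) < 1 / 2 := by
      rw [div_lt_iff₀ (by positivity : (0:ℝ) < 4 * n)]
      nlinarith
    unfold stmt12_cM; linarith
  have hPM : ∀ i j : Fin n, (i : ℕ) ≤ (j : ℕ) → stmt12_cP n i < stmt12_cM n j := by
    intro i j hij
    have h : (i : ℝ) ≤ (j : ℝ) := by exact_mod_cast hij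
    have : 2 * (i : ℝ) / (4 * n) < (2 * (j : ℝ) + 1) / (4 * n) := by
      rw [div_lt_div_iff₀ (by positivity) (by positivity)]
      nlinarith
    unfold stmt12_cP stmt12_cM; linarith
  have hMP : ∀ i j : Fin n, (j : ℕ) < (i : ℕ) → stmt12_cM n j < stmt12_cP n i := by
    intro i j hij
    have h : (j : ℝ) + 1 ≤ (i : ℝ) := by exact_mod_cast hij
    have : (2 * (j : ℝ) + 1) / (4 * n) < 2 * (i : ℝ) / (4 * n) := by
      rw [div_lt_div_iff₀ (by positivity) (by positivity)]
      nlinarith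
    unfold stmt12_cP stmt12_cM; linarith
  -- squared distance formulas
  have hdP : ∀ i : Fin n,
      dist Z (aP i) ^ 2
        = n / 2 + 2 * stmt12_cP n i ^ 2 - 2 * stmt12_cP n i * (X i - Y i) := by
    intro i
    rw [EuclideanSpace.dist_eq, Real.sq_sqrt (Finset.sum_nonneg fun j _ => sq_nonneg _),
      Fintype.sum_sum_type]
    have e1 : ∀ k : Fin n,
        dist (Z (Sum.inl k)) (aP i (Sum.inl k)) ^ 2
          = (X k - (1 / 2 + stmt12_cP n i * (if k = i then (1 : ℝ) else 0))) ^ 2 := by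
      intro k
      rw [hZj, Real.dist_eq, sq_abs, haP]
      simp only [Sum.elim_inl]
      rfl
    have e2 : ∀ k : Fin n,
        dist (Z (Sum.inr k)) (aP i (Sum.inr k)) ^ 2
          = (Y k - (1 / 2 + (-(stmt12_cP n i)) * (if k = i then (1 : ℝ) else 0))) ^ 2 := by
      intro k
      rw [hZj, Real.dist_eq, sq_abs, haP]
      simp only [Sum.elim_inr]
      by_cases h : k = i <;> simp only [h, if_pos, if_neg, if_true, if_false] <;>
        simp only [stmt12_cP, stmt12_cM] <;> ring
    rw [Finset.sum_congr rfl fun k _ => e1 k, Finset.sum_congr rfl fun k _ => e2 k,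
      stmt12_half_sum _ X hX i, stmt12_half_sum _ Y hY i]
    ring
  have hdM : ∀ j : Fin n,
      dist Z (aM j) ^ 2
        = n / 2 + 2 * stmt12_cM n j ^ 2 + 2 * stmt12_cM n j * (X j - Y j) := by
    intro j
    rw [EuclideanSpace.dist_eq, Real.sq_sqrt (Finset.sum_nonneg fun k _ => sq_nonneg _),
      Fintype.sum_sum_type]
    have e1 : ∀ k : Fin n,
        dist (Z (Sum.inl k)) (aM j (Sum.inl k)) ^ 2
          = (X k - (1 / 2 + (-(stmt12_cM n j)) * (if k = j then (1 : ℝ) else 0))) ^ 2 := by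
      intro k
      rw [hZj, Real.dist_eq, sq_abs, haM]
      simp only [Sum.elim_inl]
      by_cases h : k = j <;> simp only [h, if_pos, if_neg, if_true, if_false] <;>
        simp only [stmt12_cP, stmt12_cM] <;> ring
    have e2 : ∀ k : Fin n,
        dist (Z (Sum.inr k)) (aM j (Sum.inr k)) ^ 2
          = (Y k - (1 / 2 + stmt12_cM n j * (if k = j then (1 : ℝ) else 0))) ^ 2 := by
      intro k
      rw [hZj, Real.dist_eq, sq_abs, haM]
      simp only [Sum.elim_inr]
      by_cases h : k = j <;> simp only [h, if_pos, if_neg, if_true, if_false] <;>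
        simp only [stmt12_cP, stmt12_cM] <;> ring
    rw [Finset.sum_congr rfl fun k _ => e1 k, Finset.sum_congr rfl fun k _ => e2 k,
      stmt12_half_sum _ X hX j, stmt12_half_sum _ Y hY j]
    ring
  -- distance comparison
  have hcomp : ∀ i j : Fin n,
      (dist Z (aP i)
        < dist Z (aM j)) ↔
      stmt12_cP n i ^ 2 - stmt12_cP n i * (X i - Y i)
        < stmt12_cM n j ^ 2 + stmt12_cM n j * (X j - Y j) := by
    intro i j
    rw [← pow_lt_pow_iff_left₀ dist_nonneg dist_nonneg (two_ne_zero), hdP i, hdM j]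
    constructor <;> intro h <;> nlinarith [h]
  -- the difference vector
  set D : Fin n → ℝ := fun i => X i - Y i with hD
  have hDval : ∀ i, D i = -1 ∨ D i = 0 ∨ D i = 1 := by
    intro i
    rcases hX i with h1 | h1 <;> rcases hY i with h2 | h2 <;>
      simp only [hD] <;> rw [h1, h2] <;> norm_num
  have hLHS : (∑ i : Fin n, (2:ℝ) ^ (n - 1 - (i : ℕ)) * Y i
        ≤ ∑ i : Fin n, (2:ℝ) ^ (n - 1 - (i : ℕ)) * X i)
      ↔ 0 ≤ ∑ i : Fin n, (2:ℝ) ^ (n - 1 - (i : ℕ)) * D i := by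
    have hsum_eq : ∑ i : Fin n, (2:ℝ) ^ (n - 1 - (i : ℕ)) * X i
        - ∑ i : Fin n, (2:ℝ) ^ (n - 1 - (i : ℕ)) * Y i
        = ∑ i : Fin n, (2:ℝ) ^ (n - 1 - (i : ℕ)) * D i := by
      rw [← Finset.sum_sub_distrib]
      exact Finset.sum_congr rfl fun i _ => by simp only [hD]; ring
    constructor <;> intro h <;> linarith
  by_cases h0 : ∀ i, D i = 0
  · have hS : ∑ i : Fin n, (2:ℝ) ^ (n - 1 - (i : ℕ)) * D i = 0 :=
      Finset.sum_eq_zero fun i _ => by rw [h0 i, mul_zero]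
    rw [hLHS, hS]
    simp only [le_refl, true_iff]
    refine ⟨⟨0, hn⟩, fun j => (hcomp _ j).mpr ?_⟩
    have h1 : X ⟨0, hn⟩ - Y ⟨0, hn⟩ = 0 := h0 ⟨0, hn⟩
    have h2 : X j - Y j = 0 := h0 j
    rw [h1, h2]
    have hlt := hPM ⟨0, hn⟩ j (Nat.zero_le _)
    have hl := hcP_lb ⟨0, hn⟩
    have hm := hcM_lb j
    nlinarith [mul_pos (by linarith : (0:ℝ) < stmt12_cM n j - stmt12_cP n ⟨0, hn⟩)
      (by linarith : (0:ℝ) < stmt12_cM n j + stmt12_cP n ⟨0, hn⟩)]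
  · push_neg at h0
    have hsne : (Finset.univ.filter (fun i : Fin n => D i ≠ 0)).Nonempty := by
      obtain ⟨i, hi⟩ := h0
      exact ⟨i, by simp [hi]⟩
    set i₀ := (Finset.univ.filter (fun i : Fin n => D i ≠ 0)).min' hsne with hi₀
    have hi₀mem : D i₀ ≠ 0 := by
      have := Finset.min'_mem _ hsne
      simpa using this
    have hmin : ∀ i : Fin n, (i : ℕ) < (i₀ : ℕ) → D i = 0 := by
      intro i hlt
      by_contra hne
      have hle : i₀ ≤ i := Finset.min'_le _ i (by simp [hne])
      have := Fin.le_def.mp hle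
      omega
    -- bound on the tail
    have habs : ∀ i ∈ Finset.univ.erase i₀,
        |(2:ℝ) ^ (n - 1 - (i : ℕ)) * D i| ≤ (if i₀ < i then (2:ℝ) ^ (n - 1 - (i : ℕ)) else 0) := by
      intro i hi
      have hne : i ≠ i₀ := Finset.ne_of_mem_erase hi
      rcases lt_or_gt_of_ne hne with h | h
      · rw [hmin i (Fin.lt_def.mp h), mul_zero, abs_zero, if_neg (asymm h)]
      · rw [if_pos h, abs_mul, abs_of_pos (by positivity : (0:ℝ) < 2 ^ (n - 1 - (i : ℕ)))]
        have : |D i| ≤ 1 := by rcases hDval i with h' | h' | h' <;> rw [h'] <;> norm_num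
        nlinarith [pow_pos (by norm_num : (0:ℝ) < 2) (n - 1 - (i : ℕ))]
    have hTabs : |∑ i ∈ Finset.univ.erase i₀, (2:ℝ) ^ (n - 1 - (i : ℕ)) * D i|
        ≤ 2 ^ (n - 1 - (i₀ : ℕ)) - 1 := by
      calc |∑ i ∈ Finset.univ.erase i₀, (2:ℝ) ^ (n - 1 - (i : ℕ)) * D i|
          ≤ ∑ i ∈ Finset.univ.erase i₀, |(2:ℝ) ^ (n - 1 - (i : ℕ)) * D i| :=
            Finset.abs_sum_le_sum_abs _ _
        _ ≤ ∑ i ∈ Finset.univ.erase i₀,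
              (if i₀ < i then (2:ℝ) ^ (n - 1 - (i : ℕ)) else 0) := Finset.sum_le_sum habs
        _ = ∑ i ∈ (Finset.univ.erase i₀).filter (fun i => i₀ < i),
              (2:ℝ) ^ (n - 1 - (i : ℕ)) := (Finset.sum_filter _ _).symm
        _ ≤ ∑ i ∈ Finset.univ.filter (fun i : Fin n => i₀ < i),
              (2:ℝ) ^ (n - 1 - (i : ℕ)) := by
            refine Finset.sum_le_sum_of_subset_of_nonneg
              (Finset.filter_subset_filter _ (Finset.subset_univ _)) ?_
            intros; positivity
        _ ≤ 2 ^ (n - 1 - (i₀ : ℕ)) - 1 := stmt12_geom n i₀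
    have hsplit : ∑ i : Fin n, (2:ℝ) ^ (n - 1 - (i : ℕ)) * D i
        = (2:ℝ) ^ (n - 1 - (i₀ : ℕ)) * D i₀
          + ∑ i ∈ Finset.univ.erase i₀, (2:ℝ) ^ (n - 1 - (i : ℕ)) * D i :=
      (Finset.add_sum_erase _ _ (Finset.mem_univ i₀)).symm
    have hpow_pos : (0:ℝ) < 2 ^ (n - 1 - (i₀ : ℕ)) := by positivity
    have habs' := abs_le.mp hTabs
    rcases hDval i₀ with hval | hval | hval
    · -- D i₀ = -1 : both sides false
      have hSneg : ∑ i : Fin n, (2:ℝ) ^ (n - 1 - (i : ℕ)) * D i < 0 := by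
        rw [hsplit, hval]; linarith
      rw [hLHS]
      constructor
      · intro h; linarith
      · rintro ⟨i, hi⟩
        exfalso
        have hthis := (hcomp i i₀).mp (hi i₀)
        have hv : X i₀ - Y i₀ = -1 := hval
        rw [hv] at hthis
        have hm1 := hcM_lb i₀
        have hm2 := hcM_ub i₀
        rcases lt_trichotomy ((i : ℕ)) ((i₀ : ℕ)) with hc | hc | hc
        · have h0' : X i - Y i = 0 := hmin i hc
          rw [h0'] at hthis
          nlinarith [sq_nonneg (stmt12_cP n i)]
        · have hii : i = i₀ := Fin.ext hc
          rw [hii, hv] at hthis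
          have hl := hcP_lb i₀
          nlinarith
        · have hlt := hMP i i₀ hc
          have hb : X i - Y i ≤ 1 := by
            rcases hDval i with h' | h' | h' <;>
              rw [show X i - Y i = D i from rfl, h'] <;> norm_num
          have hl := hcP_lb i
          nlinarith [mul_pos (by linarith : (0:ℝ) < stmt12_cP n i - stmt12_cM n i₀)
              (by linarith : (0:ℝ) < stmt12_cP n i + stmt12_cM n i₀ - 1),
            mul_nonneg (by linarith : (0:ℝ) ≤ stmt12_cP n i)
              (by linarith : (0:ℝ) ≤ 1 - (X i - Y i))]
    · exact absurd hval hi₀mem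
    · -- D i₀ = 1 : both sides true
      have hSpos : 0 < ∑ i : Fin n, (2:ℝ) ^ (n - 1 - (i : ℕ)) * D i := by
        rw [hsplit, hval]; linarith
      rw [hLHS]
      refine iff_of_true (le_of_lt hSpos) ⟨i₀, fun j => (hcomp i₀ j).mpr ?_⟩
      have hv : X i₀ - Y i₀ = 1 := hval
      rw [hv]
      have hl := hcP_lb i₀
      have hu := hcP_ub i₀
      have hm := hcM_lb j
      rcases le_or_gt ((i₀ : ℕ)) ((j : ℕ)) with hc | hc
      · have hlt := hPM i₀ j hc
        have hb : -1 ≤ X j - Y j := by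
          rcases hDval j with h' | h' | h' <;>
            rw [show X j - Y j = D j from rfl, h'] <;> norm_num
        nlinarith [mul_pos (by linarith : (0:ℝ) < stmt12_cM n j - stmt12_cP n i₀)
            (by linarith : (0:ℝ) < stmt12_cM n j + stmt12_cP n i₀ - 1),
          mul_nonneg (by linarith : (0:ℝ) ≤ stmt12_cM n j)
            (by linarith : (0:ℝ) ≤ X j - Y j + 1)]
      · have h0' : X j - Y j = 0 := hmin j hc
        rw [h0', mul_zero, add_zero]
        nlinarith [mul_pos (by linarith : (0:ℝ) < stmt12_cP n i₀)
            (by linarith : (0:ℝ) < 1 - stmt12_cP n i₀),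
          mul_pos (by linarith : (0:ℝ) < stmt12_cM n j) (by linarith : (0:ℝ) < stmt12_cM n j)]
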